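/- Let (S, Δ, P) be a probability space, let (α,β) be an (α,β)-pair, let 0 < γ₁ ≤ 1 and 0 < γ₂ ≤ 1, and let {X_n}, {Y_n} be sequences of real-valued random variables on S. If X_n →^{PS_{αβ}^{γ₁}} X and Y_n →^{PS_{αβ}^{γ₂}} Y, then for any real constants c and d, the sequence {cX_n + dY_n} is αβ-statistically convergent of order max{γ₁, γ₂} in probability to cX + dY. -/

import Mathlib

open MeasureTheory Filter Set

/-- An (α,β)-pair: two non-decreasing sequences of positive reals with
`a n ≤ b n` for all `n` and `b n - a n → ∞`. -/
def ABPair (a b : ℕ → ℝ) : Prop :=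
  Monotone a ∧ Monotone b ∧ (∀ n, 0 < a n) ∧ (∀ n, a n ≤ b n) ∧
    Tendsto (fun n => b n - a n) atTop atTop

/-- The set of natural indices `k ∈ [a n, b n]` satisfying a predicate `p`. -/
def abIdx (a b : ℕ → ℝ) (n : ℕ) (p : ℕ → Prop) : Set ℕ :=
  {k : ℕ | a n ≤ (k : ℝ) ∧ (k : ℝ) ≤ b n ∧ p k}

/-- αβ-statistical convergence of order γ of a real sequence `x` to `l`. -/
def ABStatConv (a b : ℕ → ℝ) (γ : ℝ) (x : ℕ → ℝ) (l : ℝ) : Prop :=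
  ∀ ε > 0,
    Tendsto (fun n => ((abIdx a b n fun k => ε ≤ |x k - l|).ncard : ℝ) / (b n - a n + 1) ^ γ)
      atTop (nhds 0)

/-- αβ-statistical convergence of order γ in probability of the sequence of random
variables `X` to the random variable `L`, w.r.t. the probability measure `P`. -/
def PSConv {Ω : Type*} [MeasurableSpace Ω] (P : Measure Ω)
    (a b : ℕ → ℝ) (γ : ℝ) (X : ℕ → Ω → ℝ) (L : Ω → ℝ) : Prop :=
  ∀ ε > 0, ∀ δ > 0,
    Tendsto (fun n =>
      ((abIdx a b n fun k => δ ≤ (P {ω | ε ≤ |X k ω - L ω|}).toReal).ncard : ℝ)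
        / (b n - a n + 1) ^ γ) atTop (nhds 0)

/-- αβ-strong p-Cesàro summability of order γ in probability. -/
def PWConv {Ω : Type*} [MeasurableSpace Ω] (P : Measure Ω)
    (a b : ℕ → ℝ) (γ p : ℝ) (X : ℕ → Ω → ℝ) (L : Ω → ℝ) : Prop :=
  ∀ ε > 0,
    Tendsto (fun n =>
      (∑ k ∈ Finset.Icc ⌈a n⌉₊ ⌊b n⌋₊, ((P {ω | ε ≤ |X k ω - L ω|}).toReal) ^ p)
        / (b n - a n + 1) ^ γ) atTop (nhds 0)

/-- αβ-statistical convergence of order γ in r-th expectation. -/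
def ESConv {Ω : Type*} [MeasurableSpace Ω] (P : Measure Ω)
    (a b : ℕ → ℝ) (γ r : ℝ) (X : ℕ → Ω → ℝ) (L : Ω → ℝ) : Prop :=
  ∀ ε > 0,
    Tendsto (fun n =>
      ((abIdx a b n fun k => ε ≤ ∫ ω, |X k ω - L ω| ^ r ∂P).ncard : ℝ)
        / (b n - a n + 1) ^ γ) atTop (nhds 0)

/-- αβ-statistical convergence of order γ in distribution: the distribution functions
converge αβ-statistically of order γ at every continuity point of the limit d.f. -/
def DSConv {Ω : Type*} [MeasurableSpace Ω] (P : Measure Ω)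
    (a b : ℕ → ℝ) (γ : ℝ) (X : ℕ → Ω → ℝ) (L : Ω → ℝ) : Prop :=
  ∀ x : ℝ, ContinuousAt (fun t => (P {ω | L ω ≤ t}).toReal) x →
    ABStatConv a b γ (fun n => (P {ω | X n ω ≤ x}).toReal) ((P {ω | L ω ≤ x}).toReal)

/-- `K ⊆ ℕ` has αβ-density of order γ zero. -/
def ABDensityZero (a b : ℕ → ℝ) (γ : ℝ) (K : Set ℕ) : Prop :=
  Tendsto (fun n => ((abIdx a b n fun k => k ∈ K).ncard : ℝ) / (b n - a n + 1) ^ γ)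
    atTop (nhds 0)

/-- αβ-statistical limit superior of order γ of a real sequence. -/
noncomputable def abStatLimsup (a b : ℕ → ℝ) (γ : ℝ) (x : ℕ → ℝ) : ℝ :=
  sSup {t : ℝ | ¬ ABDensityZero a b γ {k | t < x k}}

/-- αβ-statistical limit inferior of order γ of a real sequence. -/
noncomputable def abStatLiminf (a b : ℕ → ℝ) (γ : ℝ) (x : ℕ → ℝ) : ℝ :=
  sInf {t : ℝ | ¬ ABDensityZero a b γ {k | x k < t}}

lemma abIdx_finite (a b : ℕ → ℝ) (n : ℕ) (p : ℕ → Prop) : (abIdx a b n p).Finite := by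
  apply (Set.finite_Iic ⌊b n⌋₊).subset
  intro k hk
  exact Nat.le_floor hk.2.1

/-- Theorem 2.2(ii): linear combinations of αβ-statistically convergent (in probability)
sequences converge to the corresponding linear combination, with order `max γ₁ γ₂`. -/
theorem PSConv_linear_combination {Ω : Type*} [MeasurableSpace Ω]
    (P : Measure Ω) [IsProbabilityMeasure P]
    (a b : ℕ → ℝ) (hab : ABPair a b)
    (γ₁ γ₂ : ℝ) (hγ₁0 : 0 < γ₁) (hγ₁1 : γ₁ ≤ 1) (hγ₂0 : 0 < γ₂) (hγ₂1 : γ₂ ≤ 1)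
    (X Y : ℕ → Ω → ℝ) (X₀ Y₀ : Ω → ℝ)
    (hX : ∀ n, Measurable (X n)) (hY : ∀ n, Measurable (Y n))
    (hX₀ : Measurable X₀) (hY₀ : Measurable Y₀)
    (h1 : PSConv P a b γ₁ X X₀) (h2 : PSConv P a b γ₂ Y Y₀) (c d : ℝ) :
    PSConv P a b (max γ₁ γ₂) (fun n ω => c * X n ω + d * Y n ω)
      (fun ω => c * X₀ ω + d * Y₀ ω) := by
  intro ε hε δ hδ
  have hc1 : (0:ℝ) < |c| + 1 := by positivity
  have hd1 : (0:ℝ) < |d| + 1 := by positivity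
  set ε₁ := ε / (2 * (|c| + 1)) with hε₁def
  set ε₂ := ε / (2 * (|d| + 1)) with hε₂def
  have hε₁ : 0 < ε₁ := by positivity
  have hε₂ : 0 < ε₂ := by positivity
  have hδ2 : 0 < δ / 2 := by positivity
  -- abbreviations
  set A : ℕ → Set ℕ := fun n =>
    abIdx a b n fun k => δ / 2 ≤ (P {ω | ε₁ ≤ |X k ω - X₀ ω|}).toReal with hA
  set B : ℕ → Set ℕ := fun n =>
    abIdx a b n fun k => δ / 2 ≤ (P {ω | ε₂ ≤ |Y k ω - Y₀ ω|}).toReal with hB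
  have hsub : ∀ n, (abIdx a b n fun k => δ ≤
      (P {ω | ε ≤ |(fun n ω => c * X n ω + d * Y n ω) k ω -
        (fun ω => c * X₀ ω + d * Y₀ ω) ω|}).toReal) ⊆ A n ∪ B n := by
    intro n k hk
    obtain ⟨hk1, hk2, hk3⟩ := hk
    by_contra hcon
    simp only [Set.mem_union, not_or] at hcon
    obtain ⟨hcA, hcB⟩ := hcon
    have hA' : ¬ δ / 2 ≤ (P {ω | ε₁ ≤ |X k ω - X₀ ω|}).toReal := fun h => hcA ⟨hk1, hk2, h⟩
    have hB' : ¬ δ / 2 ≤ (P {ω | ε₂ ≤ |Y k ω - Y₀ ω|}).toReal := fun h => hcB ⟨hk1, hk2, h⟩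
    push_neg at hA' hB'
    -- the event inclusion
    have hset : {ω | ε ≤ |c * X k ω + d * Y k ω - (c * X₀ ω + d * Y₀ ω)|} ⊆
        {ω | ε₁ ≤ |X k ω - X₀ ω|} ∪ {ω | ε₂ ≤ |Y k ω - Y₀ ω|} := by
      intro ω hω
      by_contra hω'
      simp only [Set.mem_union, Set.mem_setOf_eq, not_or, not_le] at hω'
      obtain ⟨h1', h2'⟩ := hω'
      simp only [Set.mem_setOf_eq] at hω
      have e1 : c * X k ω + d * Y k ω - (c * X₀ ω + d * Y₀ ω)
          = c * (X k ω - X₀ ω) + d * (Y k ω - Y₀ ω) := by ring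
      have habs : |c * X k ω + d * Y k ω - (c * X₀ ω + d * Y₀ ω)| ≤
          |c| * |X k ω - X₀ ω| + |d| * |Y k ω - Y₀ ω| := by
        rw [e1]
        calc |c * (X k ω - X₀ ω) + d * (Y k ω - Y₀ ω)|
            ≤ |c * (X k ω - X₀ ω)| + |d * (Y k ω - Y₀ ω)| := abs_add_le _ _
          _ = |c| * |X k ω - X₀ ω| + |d| * |Y k ω - Y₀ ω| := by rw [abs_mul, abs_mul]
      have hlt1 : |c| * |X k ω - X₀ ω| < (|c| + 1) * ε₁ := by
        calc |c| * |X k ω - X₀ ω| ≤ |c| * ε₁ :=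
              mul_le_mul_of_nonneg_left h1'.le (abs_nonneg c)
          _ < (|c| + 1) * ε₁ := by nlinarith
      have hlt2 : |d| * |Y k ω - Y₀ ω| < (|d| + 1) * ε₂ := by
        calc |d| * |Y k ω - Y₀ ω| ≤ |d| * ε₂ :=
              mul_le_mul_of_nonneg_left h2'.le (abs_nonneg d)
          _ < (|d| + 1) * ε₂ := by nlinarith
      have he1 : (|c| + 1) * ε₁ = ε / 2 := by
        rw [hε₁def]; field_simp
      have he2 : (|d| + 1) * ε₂ = ε / 2 := by
        rw [hε₂def]; field_simp
      have : |c * X k ω + d * Y k ω - (c * X₀ ω + d * Y₀ ω)| < ε := by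
        calc |c * X k ω + d * Y k ω - (c * X₀ ω + d * Y₀ ω)|
            ≤ |c| * |X k ω - X₀ ω| + |d| * |Y k ω - Y₀ ω| := habs
          _ < (|c| + 1) * ε₁ + (|d| + 1) * ε₂ := add_lt_add hlt1 hlt2
          _ = ε := by rw [he1, he2]; ring
      exact absurd hω (not_le.mpr this)
    have hP : (P {ω | ε ≤ |c * X k ω + d * Y k ω - (c * X₀ ω + d * Y₀ ω)|}).toReal ≤
        (P {ω | ε₁ ≤ |X k ω - X₀ ω|}).toReal + (P {ω | ε₂ ≤ |Y k ω - Y₀ ω|}).toReal := by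
      rw [← ENNReal.toReal_add (measure_ne_top P _) (measure_ne_top P _)]
      apply ENNReal.toReal_mono
      · exact ENNReal.add_ne_top.mpr ⟨measure_ne_top P _, measure_ne_top P _⟩
      · exact (measure_mono hset).trans (measure_union_le _ _)
    simp only at hk3
    linarith
  -- positivity and monotonicity of the denominators
  have hbase : ∀ n, (1:ℝ) ≤ b n - a n + 1 := fun n => by linarith [hab.2.2.2.1 n]
  have hpos : ∀ n, ∀ γ : ℝ, (0:ℝ) < (b n - a n + 1) ^ γ := fun n γ =>
    Real.rpow_pos_of_pos (by linarith [hbase n]) γ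
  have hle1 : ∀ n, (b n - a n + 1) ^ γ₁ ≤ (b n - a n + 1) ^ (max γ₁ γ₂) := fun n =>
    Real.rpow_le_rpow_of_exponent_le (hbase n) (le_max_left _ _)
  have hle2 : ∀ n, (b n - a n + 1) ^ γ₂ ≤ (b n - a n + 1) ^ (max γ₁ γ₂) := fun n =>
    Real.rpow_le_rpow_of_exponent_le (hbase n) (le_max_right _ _)
  have hbound : ∀ n,
      ((abIdx a b n fun k => δ ≤
        (P {ω | ε ≤ |(fun n ω => c * X n ω + d * Y n ω) k ω -
          (fun ω => c * X₀ ω + d * Y₀ ω) ω|}).toReal).ncard : ℝ) / (b n - a n + 1) ^ (max γ₁ γ₂)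
      ≤ ((A n).ncard : ℝ) / (b n - a n + 1) ^ γ₁ +
        ((B n).ncard : ℝ) / (b n - a n + 1) ^ γ₂ := by
    intro n
    have hfin : (A n ∪ B n).Finite := (abIdx_finite a b n _).union (abIdx_finite a b n _)
    have hcard : ((abIdx a b n fun k => δ ≤
        (P {ω | ε ≤ |(fun n ω => c * X n ω + d * Y n ω) k ω -
          (fun ω => c * X₀ ω + d * Y₀ ω) ω|}).toReal).ncard : ℝ)
        ≤ ((A n).ncard : ℝ) + ((B n).ncard : ℝ) := by
      have h1' := Set.ncard_le_ncard (hsub n) hfin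
      have h2' := Set.ncard_union_le (A n) (B n)
      exact_mod_cast h1'.trans h2'
    calc ((abIdx a b n fun k => δ ≤
        (P {ω | ε ≤ |(fun n ω => c * X n ω + d * Y n ω) k ω -
          (fun ω => c * X₀ ω + d * Y₀ ω) ω|}).toReal).ncard : ℝ) / (b n - a n + 1) ^ (max γ₁ γ₂)
        ≤ (((A n).ncard : ℝ) + ((B n).ncard : ℝ)) / (b n - a n + 1) ^ (max γ₁ γ₂) :=
          (div_le_div_iff_of_pos_right (hpos n _)).mpr hcard
      _ = ((A n).ncard : ℝ) / (b n - a n + 1) ^ (max γ₁ γ₂) +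
          ((B n).ncard : ℝ) / (b n - a n + 1) ^ (max γ₁ γ₂) := add_div _ _ _
      _ ≤ ((A n).ncard : ℝ) / (b n - a n + 1) ^ γ₁ +
          ((B n).ncard : ℝ) / (b n - a n + 1) ^ γ₂ :=
          add_le_add
            (div_le_div_of_nonneg_left (Nat.cast_nonneg _) (hpos n _) (hle1 n))
            (div_le_div_of_nonneg_left (Nat.cast_nonneg _) (hpos n _) (hle2 n))
  have hzero : Tendsto (fun n => ((A n).ncard : ℝ) / (b n - a n + 1) ^ γ₁ +
      ((B n).ncard : ℝ) / (b n - a n + 1) ^ γ₂) atTop (nhds 0) := by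
    have := (h1 ε₁ hε₁ (δ/2) hδ2).add (h2 ε₂ hε₂ (δ/2) hδ2)
    simpa using this
  refine tendsto_of_tendsto_of_tendsto_of_le_of_le tendsto_const_nhds hzero ?_ ?_
  · intro n
    exact div_nonneg (Nat.cast_nonneg _) (hpos n _).le
  · intro n
    exact hbound n
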